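/- Let G be a finite simple graph, let (i,j) ∈ E be a weak edge of G, and let γ ≥ 1. If R is a γ-optimal vertex cover of the reduced graph G^{(i,j)}, then R* (defined as R ∪ Δ_ij ∪ {j} if D_i ⊆ R, and R ∪ Δ_ij ∪ {i} otherwise) is a γ-optimal vertex cover of G. -/
import Mathlib


variable {V : Type*} [Fintype V] [DecidableEq V]

/-- `S` is a vertex cover of `G`: every edge has at least one endpoint in `S`. -/
def IsVertexCover (G : SimpleGraph V) (S : Finset V) : Prop :=
  ∀ ⦃a b : V⦄, G.Adj a b → a ∈ S ∨ b ∈ S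

/-- `Δ_ij`: the common neighbours of `i` and `j`. -/
def DeltaSet (G : SimpleGraph V) [DecidableRel G.Adj] (i j : V) : Finset V :=
  Finset.univ.filter fun k => G.Adj i k ∧ G.Adj j k

/-- `D_i`: the neighbours of `i` other than `j` that are not common neighbours
of `i` and `j`.  (`D_j` is `DSide G j i`.) -/
def DSide (G : SimpleGraph V) [DecidableRel G.Adj] (i j : V) : Finset V :=
  Finset.univ.filter fun s => G.Adj i s ∧ s ≠ j ∧ s ∉ DeltaSet G i j

/-- The removed vertex set `{i, j} ∪ Δ_ij`. -/
def RemovedSet (G : SimpleGraph V) [DecidableRel G.Adj] (i j : V) : Finset V :=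
  insert i (insert j (DeltaSet G i j))

/-- The reduced graph `G^{(i,j)}`: vertices outside `{i,j} ∪ Δ_ij`, with the edges of
`G` between such vertices together with all pairs `(s,t)`, `s ∈ D_i`, `t ∈ D_j`. -/
def ReducedGraph (G : SimpleGraph V) [DecidableRel G.Adj] (i j : V) : SimpleGraph V :=
  SimpleGraph.fromRel fun a b =>
    a ∉ RemovedSet G i j ∧ b ∉ RemovedSet G i j ∧
      (G.Adj a b ∨ (a ∈ DSide G i j ∧ b ∈ DSide G j i))

/-- `R` is a vertex cover of the reduced graph `G^{(i,j)}`: it is a subset of the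
vertex set of `G^{(i,j)}` and covers all its edges. -/
def IsReducedVC (G : SimpleGraph V) [DecidableRel G.Adj] (i j : V) (R : Finset V) :
    Prop :=
  (∀ v ∈ R, v ∉ RemovedSet G i j) ∧
    ∀ ⦃a b : V⦄, (ReducedGraph G i j).Adj a b → a ∈ R ∨ b ∈ R

/-- `R* = R ∪ Δ_ij ∪ {j}` if `D_i ⊆ R`, and `R* = R ∪ Δ_ij ∪ {i}` otherwise. -/
def RStar (G : SimpleGraph V) [DecidableRel G.Adj] (i j : V) (R : Finset V) :
    Finset V :=
  if DSide G i j ⊆ R then R ∪ DeltaSet G i j ∪ {j} else R ∪ DeltaSet G i j ∪ {i}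

/-- `S` is an optimal vertex cover of `G`: a vertex cover of minimum cardinality. -/
def IsOptimalVertexCover (G : SimpleGraph V) (S : Finset V) : Prop :=
  IsVertexCover G S ∧ ∀ T : Finset V, IsVertexCover G T → S.card ≤ T.card

section Helpers

variable (G : SimpleGraph V) [DecidableRel G.Adj] (i j : V)

lemma mem_deltaSet' {k : V} : k ∈ DeltaSet G i j ↔ G.Adj i k ∧ G.Adj j k := by
  simp [DeltaSet]

lemma mem_dside' {s : V} : s ∈ DSide G i j ↔ G.Adj i s ∧ s ≠ j ∧ s ∉ DeltaSet G i j := by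
  simp [DSide]

lemma mem_removed' {v : V} : v ∈ RemovedSet G i j ↔ v = i ∨ v = j ∨ v ∈ DeltaSet G i j := by
  simp [RemovedSet]

lemma dside_not_removed' {s : V} (hs : s ∈ DSide G i j) : s ∉ RemovedSet G i j := by
  rw [mem_dside'] at hs
  rw [mem_removed']
  push_neg
  exact ⟨fun h => G.irrefl (h ▸ hs.1), hs.2.1, hs.2.2⟩

lemma reduced_adj_of' {a b : V} (hne : a ≠ b) (ha : a ∉ RemovedSet G i j)
    (hb : b ∉ RemovedSet G i j)
    (h : G.Adj a b ∨ (a ∈ DSide G i j ∧ b ∈ DSide G j i)) :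
    (ReducedGraph G i j).Adj a b := by
  rw [ReducedGraph, SimpleGraph.fromRel_adj]
  exact ⟨hne, Or.inl ⟨ha, hb, h⟩⟩

lemma reduced_adj_not_removed' {a b : V} (h : (ReducedGraph G i j).Adj a b) :
    a ∉ RemovedSet G i j ∧ b ∉ RemovedSet G i j := by
  rw [ReducedGraph, SimpleGraph.fromRel_adj] at h
  rcases h.2 with ⟨h1, h2, _⟩ | ⟨h1, h2, _⟩
  exacts [⟨h1, h2⟩, ⟨h2, h1⟩]

end Helpers

/-- If `(i,j)` is a weak edge of `G`, `γ ≥ 1`, and `R` is a `γ`-optimal vertex cover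
of the reduced graph `G^{(i,j)}` (a cover whose size is at most `γ` times that of any
optimal cover of `G^{(i,j)}`), then `R*` is a `γ`-optimal vertex cover of `G`. -/
theorem rstar_gamma_optimal_of_weak (G : SimpleGraph V) [DecidableRel G.Adj]
    (i j : V) (hij : G.Adj i j)
    (hweak : ∃ V0 : Finset V, IsOptimalVertexCover G V0 ∧
      (({i, j} : Finset V) ∩ V0).card = 1)
    (γ : ℝ) (hγ : 1 ≤ γ) (R : Finset V) (hR : IsReducedVC G i j R)
    (hRγ : ∀ T : Finset V, IsReducedVC G i j T →
      (∀ T' : Finset V, IsReducedVC G i j T' → T.card ≤ T'.card) →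
      (R.card : ℝ) ≤ γ * T.card) :
    IsVertexCover G (RStar G i j R) ∧
      ∀ S0 : Finset V, IsOptimalVertexCover G S0 →
        ((RStar G i j R).card : ℝ) ≤ γ * S0.card := by
  classical
  obtain ⟨hRsub, hRcov⟩ := hR
  have hΔi : i ∉ DeltaSet G i j := fun h => G.irrefl ((mem_deltaSet' G i j).1 h).1
  have hΔj : j ∉ DeltaSet G i j := fun h => G.irrefl ((mem_deltaSet' G i j).1 h).2
  have hRi : i ∉ R := fun h => hRsub i h ((mem_removed' G i j).2 (Or.inl rfl))
  have hRj : j ∉ R := fun h => hRsub j h ((mem_removed' G i j).2 (Or.inr (Or.inl rfl)))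
  have hRΔ : Disjoint R (DeltaSet G i j) := by
    rw [Finset.disjoint_left]
    intro v hv hvΔ
    exact hRsub v hv ((mem_removed' G i j).2 (Or.inr (Or.inr hvΔ)))
  -- Part 1: R* is a vertex cover of G
  have hcover : IsVertexCover G (RStar G i j R) := by
    intro a b hab
    unfold RStar
    split_ifs with hDi
    · simp only [Finset.mem_union, Finset.mem_singleton]
      by_cases haΔ : a ∈ DeltaSet G i j
      · tauto
      by_cases hbΔ : b ∈ DeltaSet G i j
      · tauto
      by_cases haj : a = j
      · tauto
      by_cases hbj : b = j
      · tauto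
      by_cases hai : a = i
      · have hb : b ∈ DSide G i j := (mem_dside' G i j).2 ⟨hai ▸ hab, hbj, hbΔ⟩
        have := hDi hb; tauto
      by_cases hbi : b = i
      · have ha : a ∈ DSide G i j := (mem_dside' G i j).2 ⟨(hbi ▸ hab).symm, haj, haΔ⟩
        have := hDi ha; tauto
      · have ha : a ∉ RemovedSet G i j := by rw [mem_removed']; tauto
        have hb : b ∉ RemovedSet G i j := by rw [mem_removed']; tauto
        have := hRcov (reduced_adj_of' G i j hab.ne ha hb (Or.inl hab))
        tauto
    · obtain ⟨s, hsD, hsR⟩ := Finset.not_subset.1 hDi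
      simp only [Finset.mem_union, Finset.mem_singleton]
      by_cases haΔ : a ∈ DeltaSet G i j
      · tauto
      by_cases hbΔ : b ∈ DeltaSet G i j
      · tauto
      by_cases hai : a = i
      · tauto
      by_cases hbi : b = i
      · tauto
      by_cases haj : a = j
      · have hb : b ∈ DSide G j i := by
          rw [mem_dside']
          refine ⟨haj ▸ hab, hbi, ?_⟩
          rw [mem_deltaSet'] at hbΔ ⊢
          tauto
        have hsb : s ≠ b := by
          rintro rfl
          have hs' := (mem_dside' G i j).1 hsD
          have hb' := (mem_dside' G j i).1 hb
          exact hs'.2.2 ((mem_deltaSet' G i j).2 ⟨hs'.1, hb'.1⟩)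
        have hbRem : b ∉ RemovedSet G i j := by
          rw [mem_removed']
          push_neg
          exact ⟨hbi, fun h => G.irrefl (h ▸ haj ▸ hab), hbΔ⟩
        have := hRcov (reduced_adj_of' G i j hsb (dside_not_removed' G i j hsD)
          hbRem (Or.inr ⟨hsD, hb⟩))
        tauto
      by_cases hbj : b = j
      · have ha : a ∈ DSide G j i := by
          rw [mem_dside']
          refine ⟨(hbj ▸ hab).symm, hai, ?_⟩
          rw [mem_deltaSet'] at haΔ ⊢
          tauto
        have hsa : s ≠ a := by
          rintro rfl
          have hs' := (mem_dside' G i j).1 hsD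
          have ha' := (mem_dside' G j i).1 ha
          exact hs'.2.2 ((mem_deltaSet' G i j).2 ⟨hs'.1, ha'.1⟩)
        have haRem : a ∉ RemovedSet G i j := by
          rw [mem_removed']
          push_neg
          refine ⟨hai, ?_, haΔ⟩
          intro h
          rw [h, hbj] at hab
          exact G.irrefl hab
        have := hRcov (reduced_adj_of' G i j hsa (dside_not_removed' G i j hsD)
          haRem (Or.inr ⟨hsD, ha⟩))
        tauto
      · have ha : a ∉ RemovedSet G i j := by rw [mem_removed']; tauto
        have hb : b ∉ RemovedSet G i j := by rw [mem_removed']; tauto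
        have := hRcov (reduced_adj_of' G i j hab.ne ha hb (Or.inl hab))
        tauto
  refine ⟨hcover, ?_⟩
  -- cardinality of R*
  have hcard : (RStar G i j R).card = R.card + (DeltaSet G i j).card + 1 := by
    have hdRΔ : (R ∪ DeltaSet G i j).card = R.card + (DeltaSet G i j).card :=
      Finset.card_union_of_disjoint hRΔ
    unfold RStar
    split_ifs
    · have hdj : Disjoint (R ∪ DeltaSet G i j) ({j} : Finset V) := by
        simp [Finset.disjoint_singleton_right, hRj, hΔj]
      rw [Finset.card_union_of_disjoint hdj, hdRΔ, Finset.card_singleton]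
    · have hdi : Disjoint (R ∪ DeltaSet G i j) ({i} : Finset V) := by
        simp [Finset.disjoint_singleton_right, hRi, hΔi]
      rw [Finset.card_union_of_disjoint hdi, hdRΔ, Finset.card_singleton]
  -- existence of an optimal reduced vertex cover
  obtain ⟨T, hT, hTmin⟩ : ∃ T, IsReducedVC G i j T ∧
      ∀ T', IsReducedVC G i j T' → T.card ≤ T'.card := by
    have hfullmem : (Finset.univ.filter fun v => v ∉ RemovedSet G i j) ∈
        Finset.univ.filter fun T => IsReducedVC G i j T := by
      rw [Finset.mem_filter]
      refine ⟨Finset.mem_univ _, fun v hv => (Finset.mem_filter.1 hv).2, ?_⟩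
      intro a b hab
      exact Or.inl (Finset.mem_filter.2
        ⟨Finset.mem_univ _, (reduced_adj_not_removed' G i j hab).1⟩)
    obtain ⟨T, hTmem, hTle⟩ := Finset.exists_min_image _ Finset.card ⟨_, hfullmem⟩
    refine ⟨T, (Finset.mem_filter.1 hTmem).2, fun T' hT' =>
      hTle T' (Finset.mem_filter.2 ⟨Finset.mem_univ _, hT'⟩)⟩
  -- from the weak edge, a reduced cover of size |V0| - |Δ| - 1
  obtain ⟨V0, hV0opt, hV0card⟩ := hweak
  have hcases : (i ∈ V0 ∧ j ∉ V0) ∨ (j ∈ V0 ∧ i ∉ V0) := by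
    by_cases hi : i ∈ V0 <;> by_cases hj : j ∈ V0
    · exfalso
      have heq : ({i, j} : Finset V) ∩ V0 = {i, j} := by
        apply Finset.inter_eq_left.2
        intro x hx
        simp only [Finset.mem_insert, Finset.mem_singleton] at hx
        rcases hx with rfl | rfl <;> assumption
      have h2 : ({i, j} : Finset V).card = 2 := by
        rw [Finset.card_insert_of_notMem (by simp [hij.ne]), Finset.card_singleton]
      rw [heq, h2] at hV0card
      omega
    · exact Or.inl ⟨hi, hj⟩
    · exact Or.inr ⟨hj, hi⟩
    · exact absurd (hV0opt.1 hij) (by tauto)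
  have hkey : ∃ T0, IsReducedVC G i j T0 ∧
      T0.card + ((DeltaSet G i j).card + 1) = V0.card := by
    have hΔV0 : DeltaSet G i j ⊆ V0 ∨ True := Or.inr trivial
    rcases hcases with ⟨hi, hj⟩ | ⟨hj, hi⟩
    · -- i ∈ V0, j ∉ V0 : remove i and Δ
      have hΔsub : DeltaSet G i j ⊆ V0 := fun k hk => by
        rcases hV0opt.1 ((mem_deltaSet' G i j).1 hk).2 with h | h
        · exact absurd h hj
        · exact h
      have hDjsub : DSide G j i ⊆ V0 := fun t ht => by
        rcases hV0opt.1 ((mem_dside' G j i).1 ht).1 with h | h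
        · exact absurd h hj
        · exact h
      refine ⟨V0 \ insert i (DeltaSet G i j), ⟨?_, ?_⟩, ?_⟩
      · intro v hv
        rw [Finset.mem_sdiff, Finset.mem_insert] at hv
        push_neg at hv
        rw [mem_removed']
        push_neg
        exact ⟨hv.2.1, fun h => hj (h ▸ hv.1), hv.2.2⟩
      · intro a b hab
        have hrem := reduced_adj_not_removed' G i j hab
        have hainr : a ∉ insert i (DeltaSet G i j) := by
          have := hrem.1; rw [mem_removed'] at this; push_neg at this
          simp [this.1, this.2.2]
        have hbinr : b ∉ insert i (DeltaSet G i j) := by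
          have := hrem.2; rw [mem_removed'] at this; push_neg at this
          simp [this.1, this.2.2]
        rw [ReducedGraph, SimpleGraph.fromRel_adj] at hab
        rcases hab.2 with ⟨_, _, hadj | ⟨_, hbD⟩⟩ | ⟨_, _, hadj | ⟨_, haD⟩⟩
        · rcases hV0opt.1 hadj with h | h
          · exact Or.inl (Finset.mem_sdiff.2 ⟨h, hainr⟩)
          · exact Or.inr (Finset.mem_sdiff.2 ⟨h, hbinr⟩)
        · exact Or.inr (Finset.mem_sdiff.2 ⟨hDjsub hbD, hbinr⟩)
        · rcases hV0opt.1 hadj with h | h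
          · exact Or.inr (Finset.mem_sdiff.2 ⟨h, hbinr⟩)
          · exact Or.inl (Finset.mem_sdiff.2 ⟨h, hainr⟩)
        · exact Or.inl (Finset.mem_sdiff.2 ⟨hDjsub haD, hainr⟩)
      · have hsub : insert i (DeltaSet G i j) ⊆ V0 :=
          Finset.insert_subset hi hΔsub
        have hci : (insert i (DeltaSet G i j)).card = (DeltaSet G i j).card + 1 :=
          Finset.card_insert_of_notMem hΔi
        rw [Finset.card_sdiff_of_subset hsub, hci]
        have := Finset.card_le_card hsub
        omega
    · -- j ∈ V0, i ∉ V0 : remove j and Δ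
      have hΔsub : DeltaSet G i j ⊆ V0 := fun k hk => by
        rcases hV0opt.1 ((mem_deltaSet' G i j).1 hk).1 with h | h
        · exact absurd h hi
        · exact h
      have hDisub : DSide G i j ⊆ V0 := fun t ht => by
        rcases hV0opt.1 ((mem_dside' G i j).1 ht).1 with h | h
        · exact absurd h hi
        · exact h
      refine ⟨V0 \ insert j (DeltaSet G i j), ⟨?_, ?_⟩, ?_⟩
      · intro v hv
        rw [Finset.mem_sdiff, Finset.mem_insert] at hv
        push_neg at hv
        rw [mem_removed']
        push_neg
        exact ⟨fun h => hi (h ▸ hv.1), hv.2.1, hv.2.2⟩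
      · intro a b hab
        have hrem := reduced_adj_not_removed' G i j hab
        have hainr : a ∉ insert j (DeltaSet G i j) := by
          have := hrem.1; rw [mem_removed'] at this; push_neg at this
          simp [this.2.1, this.2.2]
        have hbinr : b ∉ insert j (DeltaSet G i j) := by
          have := hrem.2; rw [mem_removed'] at this; push_neg at this
          simp [this.2.1, this.2.2]
        rw [ReducedGraph, SimpleGraph.fromRel_adj] at hab
        rcases hab.2 with ⟨_, _, hadj | ⟨haD, _⟩⟩ | ⟨_, _, hadj | ⟨hbD, _⟩⟩
        · rcases hV0opt.1 hadj with h | h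
          · exact Or.inl (Finset.mem_sdiff.2 ⟨h, hainr⟩)
          · exact Or.inr (Finset.mem_sdiff.2 ⟨h, hbinr⟩)
        · exact Or.inl (Finset.mem_sdiff.2 ⟨hDisub haD, hainr⟩)
        · rcases hV0opt.1 hadj with h | h
          · exact Or.inr (Finset.mem_sdiff.2 ⟨h, hbinr⟩)
          · exact Or.inl (Finset.mem_sdiff.2 ⟨h, hainr⟩)
        · exact Or.inr (Finset.mem_sdiff.2 ⟨hDisub hbD, hbinr⟩)
      · have hsub : insert j (DeltaSet G i j) ⊆ V0 :=
          Finset.insert_subset hj hΔsub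
        have hcj : (insert j (DeltaSet G i j)).card = (DeltaSet G i j).card + 1 :=
          Finset.card_insert_of_notMem hΔj
        rw [Finset.card_sdiff_of_subset hsub, hcj]
        have := Finset.card_le_card hsub
        omega
  obtain ⟨T0, hT0, hT0card⟩ := hkey
  -- final arithmetic
  intro S0 hS0
  have hγ0 : (0:ℝ) ≤ γ := le_trans zero_le_one hγ
  have hRle : (R.card : ℝ) ≤ γ * T.card := hRγ T hT hTmin
  have hTle : (T.card : ℝ) ≤ T0.card := by exact_mod_cast hTmin T0 hT0
  have h2 : γ * (T.card : ℝ) ≤ γ * T0.card := mul_le_mul_of_nonneg_left hTle hγ0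
  have h3 : ((DeltaSet G i j).card : ℝ) + 1 ≤ γ * (((DeltaSet G i j).card : ℝ) + 1) :=
    le_mul_of_one_le_left (by positivity) hγ
  have hc : (T0.card : ℝ) + (((DeltaSet G i j).card : ℝ) + 1) = V0.card := by
    exact_mod_cast hT0card
  have h4 : γ * (T0.card : ℝ) + γ * (((DeltaSet G i j).card : ℝ) + 1) = γ * V0.card := by
    rw [← mul_add, hc]
  have hV0S0 : (V0.card : ℝ) ≤ S0.card := by exact_mod_cast hV0opt.2 S0 hS0.1
  have h5 : γ * (V0.card : ℝ) ≤ γ * S0.card := mul_le_mul_of_nonneg_left hV0S0 hγ0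
  have hcard' : ((RStar G i j R).card : ℝ) =
      (R.card : ℝ) + (((DeltaSet G i j).card : ℝ) + 1) := by
    rw [hcard]; push_cast; ring
  linarith
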